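/- In the 3-state cyclic game, when the other player plays constantly a₁, the advantage of any deviating action a₂ at any state is nonpositive: for the equilibrium π^E and any state s, A_i^{π^E}(a₂, s) = Q_i^{π^E}(s, (a₂, a₁)) − V_i^{π^E}(s) satisfies A_i^{π^E}(a₂, s) ≤ γ · A_i^{π^E}(a₂, s), hence A_i^{π^E}(a₂, s) ≤ 0. -/

import Mathlib

open scoped BigOperators

namespace MAIL

/-- An `n`-player Markov Game with finite state space `S` and finite
per-player action spaces `A i` (joint actions are dependent functions). -/
structure Game (n : ℕ) (S : Type) (A : Fin n → Type) [Fintype S] [∀ i, Fintype (A i)] where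
  P : S → (∀ i, A i) → S → ℝ
  r : Fin n → S → (∀ i, A i) → ℝ
  ν₀ : S → ℝ
  γ : ℝ

variable {n : ℕ} {S : Type} {A : Fin n → Type} [Fintype S] [∀ i, Fintype (A i)]

/-- A (per-player or joint) policy is a probability distribution over actions at each state. -/
def IsPol {B : Type} [Fintype B] (π : S → B → ℝ) : Prop :=
  (∀ s b, 0 ≤ π s b) ∧ ∀ s, ∑ b, π s b = 1

/-- Standard validity assumptions on a game: `γ ∈ [0,1)`, `ν₀` a distribution,
`P` a transition kernel, rewards bounded in `[-1,1]`. -/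
def IsGame (G : Game n S A) : Prop :=
  0 ≤ G.γ ∧ G.γ < 1 ∧ (∀ s, 0 ≤ G.ν₀ s) ∧ (∑ s, G.ν₀ s = 1) ∧
    (∀ s a, (∀ s', 0 ≤ G.P s a s') ∧ ∑ s', G.P s a s' = 1) ∧
    (∀ i s a, |G.r i s a| ≤ 1)

/-- Joint (product) policy induced by independent per-player policies. -/
def joint (π : ∀ i, S → A i → ℝ) : S → (∀ i, A i) → ℝ :=
  fun s a => ∏ i, π i s (a i)

/-- `stateDist G π t s = P(s_t = s)` when rolling out joint policy `π`. -/
def stateDist (G : Game n S A) (π : S → (∀ i, A i) → ℝ) : ℕ → S → ℝ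
  | 0 => G.ν₀
  | t + 1 => fun s' => ∑ s : S, ∑ a : (∀ i, A i), stateDist G π t s * π s a * G.P s a s'

/-- Discounted state occupancy measure `μ_π(s) = (1-γ) ∑_t γ^t P(s_t = s)`. -/
noncomputable def occ (G : Game n S A) (π : S → (∀ i, A i) → ℝ) (s : S) : ℝ :=
  (1 - G.γ) * ∑' t : ℕ, G.γ ^ t * stateDist G π t s

/-- State-action occupancy measure `ρ_π(s,a) = μ_π(s) π(a|s)`. -/
noncomputable def saOcc (G : Game n S A) (π : S → (∀ i, A i) → ℝ)
    (s : S) (a : ∀ i, A i) : ℝ :=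
  occ G π s * π s a

/-- Player `i`'s value `V_i^π(ν₀) = (1/(1-γ)) E_{(s,a)∼ρ_π}[r_i(s,a)]`. -/
noncomputable def value (G : Game n S A) (i : Fin n) (π : S → (∀ i, A i) → ℝ) : ℝ :=
  (1 / (1 - G.γ)) * ∑ s : S, ∑ a : (∀ i, A i), saOcc G π s a * G.r i s a

/-- Player `i`'s value started from the Dirac distribution at state `s`. -/
noncomputable def valueFrom [DecidableEq S] (G : Game n S A) (i : Fin n)
    (π : S → (∀ i, A i) → ℝ) (s₀ : S) : ℝ :=
  value { G with ν₀ := fun s => if s = s₀ then 1 else 0 } i π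

/-- State-action value `Q_i^π(s,a) = r_i(s,a) + γ ∑_{s'} P(s'|s,a) V_i^π(s')`. -/
noncomputable def Qf [DecidableEq S] (G : Game n S A) (i : Fin n)
    (π : S → (∀ i, A i) → ℝ) (s : S) (a : ∀ i, A i) : ℝ :=
  G.r i s a + G.γ * ∑ s' : S, G.P s a s' * valueFrom G i π s'

/-- Unilateral deviation: player `i` switches to `πi'`, the others keep `π`. -/
def dev (π : ∀ i, S → A i → ℝ) (i : Fin n) (πi' : S → A i → ℝ) :
    ∀ j, S → A j → ℝ :=
  Function.update π i πi'

/-- Behavioral-cloning error of player `i`: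
`E_{s ∼ μ_{π^E}} ‖π_i(·|s) − π^E_i(·|s)‖₁`. -/
noncomputable def bcErr (G : Game n S A) (πE π : ∀ i, S → A i → ℝ) (i : Fin n) : ℝ :=
  ∑ s : S, occ G (joint πE) s * ∑ b : A i, |π i s b - πE i s b|

end MAIL

namespace MAIL

/-- The 3-state cyclic cooperative two-player game of Figure 1: joint action
`(a₁,a₁)` (encoded as both players playing `0`) advances the cycle
`s₀ → s₁ → s₂ → s₀` with common rewards `1/3, 2/3, 1`; any other joint action
self-loops with common reward `-1`. Uniform initial distribution. -/
noncomputable def cyclicGame (γ : ℝ) : Game 2 (Fin 3) (fun _ => Fin 2) where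
  P := fun s a s' =>
    if a 0 = 0 ∧ a 1 = 0 then (if s' = s + 1 then (1 : ℝ) else 0)
    else (if s' = s then 1 else 0)
  r := fun _ s a =>
    if a 0 = 0 ∧ a 1 = 0 then
      (if s = 0 then (1 : ℝ) / 3 else if s = 1 then 2 / 3 else 1)
    else -1
  ν₀ := fun _ => 1 / 3
  γ := γ

/-- Expert product policy: both players constantly play `a₁` (= `0`). -/
def cyclicExpert : ∀ _ : Fin 2, Fin 3 → Fin 2 → ℝ :=
  fun _ _ a => if a = 0 then 1 else 0

/-- Learned product policy: player 1 plays `a₁` (= `0`), player 2 plays `a₂` (= `1`). -/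
def cyclicLearner : ∀ i : Fin 2, Fin 3 → Fin 2 → ℝ :=
  fun i _ a => if a = (if i = 0 then (0 : Fin 2) else 1) then 1 else 0

/-- Per-step reward along the expert cycle. -/
noncomputable def rr3 : Fin 3 → ℝ := fun s => if s = 0 then 1/3 else if s = 1 then 2/3 else 1

lemma rr3_nonneg (s : Fin 3) : 0 ≤ rr3 s := by unfold rr3; split_ifs <;> norm_num

lemma rr3_le_one (s : Fin 3) : rr3 s ≤ 1 := by unfold rr3; split_ifs <;> norm_num

lemma jointE (s : Fin 3) (a : ∀ _ : Fin 2, Fin 2) :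
    joint cyclicExpert s a = if a 0 = 0 ∧ a 1 = 0 then 1 else 0 := by
  unfold joint cyclicExpert
  rw [Fin.prod_univ_two]
  by_cases h0 : a 0 = 0 <;> by_cases h1 : a 1 = 0 <;> simp [h0, h1]

lemma ne_zero_fn {a : ∀ _ : Fin 2, Fin 2} (h : a ≠ fun _ => 0) : ¬(a 0 = 0 ∧ a 1 = 0) := by
  intro ⟨h0, h1⟩
  exact h (funext fun j => by fin_cases j <;> assumption)

/-- The cyclic game started from the Dirac at `s₀`. -/
noncomputable def G3 (γ : ℝ) (s₀ : Fin 3) : Game 2 (Fin 3) (fun _ => Fin 2) :=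
  { cyclicGame γ with ν₀ := fun s => if s = s₀ then 1 else 0 }

open Fin.NatCast in
lemma sd3 (γ : ℝ) (s₀ : Fin 3) (t : ℕ) (s : Fin 3) :
    stateDist (G3 γ s₀) (joint cyclicExpert) t s
      = if s = s₀ + (t : Fin 3) then 1 else 0 := by
  induction t generalizing s with
  | zero => simp [stateDist, G3]
  | succ t ih =>
    show (∑ s' : Fin 3, ∑ a : (∀ _ : Fin 2, Fin 2),
        stateDist (G3 γ s₀) (joint cyclicExpert) t s' * joint cyclicExpert s' a
          * (G3 γ s₀).P s' a s) = _
    simp only [ih]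
    rw [Fintype.sum_eq_single (s₀ + (t : Fin 3))]
    · rw [Fintype.sum_eq_single (fun _ => (0 : Fin 2))]
      · have hc : ((t + 1 : ℕ) : Fin 3) = (t : Fin 3) + 1 := by push_cast; ring
        simp [jointE, G3, cyclicGame, hc, add_assoc]
      · intro a ha
        simp [jointE, ne_zero_fn ha]
    · intro s' hs'
      simp [hs']

lemma summable_aux (γ : ℝ) (hγ0 : 0 < γ) (hγ1 : γ < 1) (f : ℕ → ℝ)
    (h0 : ∀ t, 0 ≤ f t) (h1 : ∀ t, f t ≤ 1) :
    Summable (fun t : ℕ => γ ^ t * f t) := by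
  apply Summable.of_nonneg_of_le
    (fun t => mul_nonneg (pow_nonneg hγ0.le t) (h0 t))
    (fun t => by
      calc γ ^ t * f t ≤ γ ^ t * 1 := by
            exact mul_le_mul_of_nonneg_left (h1 t) (pow_nonneg hγ0.le t)
        _ = γ ^ t := by ring)
    (summable_geometric_of_lt_one hγ0.le hγ1)

open Fin.NatCast in
/-- The value of the expert policy started from `s₀`. -/
noncomputable def Vval (γ : ℝ) (s₀ : Fin 3) : ℝ := ∑' t : ℕ, γ ^ t * rr3 (s₀ + (t : Fin 3))

lemma Vval_nonneg (γ : ℝ) (hγ0 : 0 < γ) (s₀ : Fin 3) : 0 ≤ Vval γ s₀ :=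
  tsum_nonneg fun t => mul_nonneg (pow_nonneg hγ0.le t) (rr3_nonneg _)

open Fin.NatCast in
lemma valueFrom_eq (γ : ℝ) (hγ0 : 0 < γ) (hγ1 : γ < 1) (i : Fin 2) (s₀ : Fin 3) :
    valueFrom (cyclicGame γ) i (joint cyclicExpert) s₀ = Vval γ s₀ := by
  have h1γ : (1 : ℝ) - γ ≠ 0 := by linarith
  have hval : valueFrom (cyclicGame γ) i (joint cyclicExpert) s₀
      = value (G3 γ s₀) i (joint cyclicExpert) := rfl
  rw [hval]
  unfold value saOcc occ
  have hinner : ∀ s : Fin 3,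
      (∑ a : (∀ _ : Fin 2, Fin 2),
        ((1 - (G3 γ s₀).γ) * ∑' t : ℕ, (G3 γ s₀).γ ^ t
            * stateDist (G3 γ s₀) (joint cyclicExpert) t s)
          * joint cyclicExpert s a * (G3 γ s₀).r i s a)
      = (1 - γ) * (∑' t : ℕ, γ ^ t
          * stateDist (G3 γ s₀) (joint cyclicExpert) t s) * rr3 s := by
    intro s
    rw [Fintype.sum_eq_single (fun _ => (0 : Fin 2))]
    · show _ * joint cyclicExpert s (fun _ => 0) * (G3 γ s₀).r i s (fun _ => 0) = _
      have : (G3 γ s₀).r i s (fun _ => 0) = rr3 s := by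
        simp [G3, cyclicGame, rr3]
      rw [this, jointE]
      simp [G3, cyclicGame]
    · intro a ha
      simp [jointE, ne_zero_fn ha]
  rw [Finset.sum_congr rfl (fun s _ => hinner s)]
  have hsum : ∀ s : Fin 3, Summable (fun t : ℕ => γ ^ t
      * stateDist (G3 γ s₀) (joint cyclicExpert) t s * rr3 s) := by
    intro s
    have := summable_aux γ hγ0 hγ1
      (fun t => stateDist (G3 γ s₀) (joint cyclicExpert) t s * rr3 s)
      (fun t => by simp only [sd3]; split_ifs <;> simp [rr3_nonneg])
      (fun t => by
        simp only [sd3]; split_ifs with h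
        · simpa using rr3_le_one s
        · simp)
    simpa [mul_assoc] using this
  have key : (∑ s : Fin 3, (1 - γ) * (∑' t : ℕ, γ ^ t
        * stateDist (G3 γ s₀) (joint cyclicExpert) t s) * rr3 s)
      = (1 - γ) * Vval γ s₀ := by
    have : ∀ s : Fin 3, (1 - γ) * (∑' t : ℕ, γ ^ t
          * stateDist (G3 γ s₀) (joint cyclicExpert) t s) * rr3 s
        = (1 - γ) * ∑' t : ℕ, γ ^ t
            * stateDist (G3 γ s₀) (joint cyclicExpert) t s * rr3 s := by
      intro s
      rw [mul_assoc, ← tsum_mul_right]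
    rw [Finset.sum_congr rfl (fun s _ => this s), ← Finset.mul_sum]
    congr 1
    rw [← Summable.tsum_finsetSum (fun s _ => hsum s)]
    unfold Vval
    apply tsum_congr
    intro t
    simp only [sd3]
    rw [Fintype.sum_eq_single (s₀ + (t : Fin 3))]
    · simp
    · intro s hs; simp [hs]
  rw [key]
  have hg : (G3 γ s₀).γ = γ := rfl
  rw [hg]
  field_simp

lemma Qf_eq (γ : ℝ) (hγ0 : 0 < γ) (hγ1 : γ < 1) (i : Fin 2) (s : Fin 3) :
    Qf (cyclicGame γ) i (joint cyclicExpert) s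
        (fun j => if j = i then (1 : Fin 2) else 0)
      = -1 + γ * Vval γ s := by
  unfold Qf
  have hcond : ¬(((fun j => if j = i then (1 : Fin 2) else 0) : ∀ _ : Fin 2, Fin 2) 0 = 0
      ∧ ((fun j => if j = i then (1 : Fin 2) else 0) : ∀ _ : Fin 2, Fin 2) 1 = 0) := by
    fin_cases i <;> simp
  have hr : (cyclicGame γ).r i s (fun j => if j = i then (1 : Fin 2) else 0) = -1 := by
    simp only [cyclicGame]
    rw [if_neg hcond]
  have hP : ∀ s' : Fin 3, (cyclicGame γ).P s (fun j => if j = i then (1 : Fin 2) else 0) s'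
      = if s' = s then 1 else 0 := by
    intro s'
    simp only [cyclicGame]
    rw [if_neg hcond]
  rw [hr]
  have : (∑ s' : Fin 3, (cyclicGame γ).P s (fun j => if j = i then (1 : Fin 2) else 0) s'
      * valueFrom (cyclicGame γ) i (joint cyclicExpert) s')
      = valueFrom (cyclicGame γ) i (joint cyclicExpert) s := by
    simp only [hP]
    rw [Fintype.sum_eq_single s] <;> simp +contextual
  rw [this, valueFrom_eq γ hγ0 hγ1]
  have hg : (cyclicGame γ).γ = γ := rfl
  rw [hg]

/-- in the 3-state cyclic game, when the other player plays `a₁`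
constantly, the advantage of the deviating action `a₂` for player `i` at any
state `s` satisfies `A ≤ γ A`, hence `A ≤ 0`. -/
theorem cyclic_deviation_advantage_nonpos (γ : ℝ) (hγ0 : 0 < γ) (hγ1 : γ < 1)
    (i : Fin 2) (s : Fin 3) :
    Qf (cyclicGame γ) i (joint cyclicExpert) s
        (fun j => if j = i then (1 : Fin 2) else 0) -
      valueFrom (cyclicGame γ) i (joint cyclicExpert) s ≤
    γ * (Qf (cyclicGame γ) i (joint cyclicExpert) s
        (fun j => if j = i then (1 : Fin 2) else 0) -
      valueFrom (cyclicGame γ) i (joint cyclicExpert) s) ∧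
    Qf (cyclicGame γ) i (joint cyclicExpert) s
        (fun j => if j = i then (1 : Fin 2) else 0) -
      valueFrom (cyclicGame γ) i (joint cyclicExpert) s ≤ 0 := by
  rw [Qf_eq γ hγ0 hγ1, valueFrom_eq γ hγ0 hγ1]
  have hV := Vval_nonneg γ hγ0 s
  constructor
  · nlinarith [mul_nonneg (mul_nonneg (sub_nonneg.2 hγ1.le) (sub_nonneg.2 hγ1.le)) hV]
  · nlinarith [mul_nonneg (sub_nonneg.2 hγ1.le) hV]

end MAIL
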